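/- With the setup of empirical and population gradient descent, for any t ≥ 0: ‖w^S_{t+1} − w^D_{t+1}‖² ≤ (1 + 1/(t+1))·‖w^S_t − w^D_t‖² + η²(t+1)·‖∇F_S(w^D_t) − ∇F_D(w^D_t)‖² + 4η²L². -/

import Mathlib

open InnerProductSpace
open scoped RealInnerProductSpace

lemma grad_first_order {d : ℕ} (f : EuclideanSpace ℝ (Fin d) → ℝ)
    (hconv : ConvexOn ℝ Set.univ f) (hdiff : Differentiable ℝ f)
    (x y : EuclideanSpace ℝ (Fin d)) :
    inner ℝ (gradient f x) (y - x) ≤ f y - f x := by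
  rcases eq_or_ne x y with rfl | hxy
  · simp
  set g : ℝ → ℝ := fun s => f (AffineMap.lineMap x y s) with hg
  have hgconv : ConvexOn ℝ Set.univ g := by
    have := hconv.comp_affineMap (AffineMap.lineMap x y)
    exact this
  have hderiv : ∀ s : ℝ, HasDerivAt g (inner ℝ (gradient f (AffineMap.lineMap x y s)) (y - x)) s := by
    intro s
    have h1 : HasDerivAt (fun s : ℝ => (AffineMap.lineMap x y s : EuclideanSpace ℝ (Fin d)))
        (y - x) s := by
      have : HasDerivAt (fun s : ℝ => s • (y - x) + x) ((1 : ℝ) • (y - x)) s :=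
        ((hasDerivAt_id s).smul_const (y - x)).add_const x
      simp only [one_smul] at this
      refine this.congr_of_eventuallyEq ?_
      filter_upwards with u
      simp [AffineMap.lineMap_apply_module']
    have h2 := (hdiff _).hasGradientAt.hasFDerivAt.comp_hasDerivAt s h1
    simp [toDual_apply_apply] at h2 ⊢
    exact h2
  have key : inner ℝ (gradient f x) (y - x) ≤ slope g 0 1 :=
    hgconv.le_slope_of_hasDerivAt (Set.mem_univ 0) (Set.mem_univ 1) one_pos
      (by simpa using hderiv 0)
  simpa [slope, hg] using key

lemma grad_mono {d : ℕ} (f : EuclideanSpace ℝ (Fin d) → ℝ)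
    (hconv : ConvexOn ℝ Set.univ f) (hdiff : Differentiable ℝ f)
    (x y : EuclideanSpace ℝ (Fin d)) :
    0 ≤ ⟪gradient f x - gradient f y, x - y⟫_ℝ := by
  have h1 := grad_first_order f hconv hdiff x y
  have h2 := grad_first_order f hconv hdiff y x
  have e1 : (inner ℝ (gradient f x) (y - x) : ℝ) = - inner ℝ (gradient f x) (x - y) := by
    rw [← inner_neg_right]; congr 1; abel
  rw [inner_sub_left]
  rw [e1] at h1
  linarith

lemma grad_norm_le {d : ℕ} (f : EuclideanSpace ℝ (Fin d) → ℝ) {L : ℝ} (hL : 0 ≤ L)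
    (hlip : LipschitzWith L.toNNReal f) (x : EuclideanSpace ℝ (Fin d)) :
    ‖gradient f x‖ ≤ L := by
  have h : ‖gradient f x‖ = ‖fderiv ℝ f x‖ := by
    rw [gradient]; exact LinearIsometryEquiv.norm_map _ _
  rw [h]
  have := norm_fderiv_le_of_lipschitz ℝ hlip (x₀ := x)
  simpa [Real.coe_toNNReal L hL] using this

lemma real_arith (na ng nv ip ig η L T : ℝ) (hη : 0 ≤ η) (hL : 0 ≤ L) (hT : 0 < T)
    (hmono : 0 ≤ ip) (hcs : |ig| ≤ na * ng) (hvle : nv ≤ 2 * L)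
    (hnv : 0 ≤ nv) (hna : 0 ≤ na) (hng : 0 ≤ ng) :
    na ^ 2 - 2 * (η * (ip + ig)) + η ^ 2 * nv ^ 2
      ≤ (1 + 1 / T) * na ^ 2 + η ^ 2 * T * ng ^ 2 + 4 * η ^ 2 * L ^ 2 := by
  have hcross : -(2 * (η * ig)) ≤ 1 / T * na ^ 2 + η ^ 2 * T * ng ^ 2 := by
    have e : 1 / T * na ^ 2 + η ^ 2 * T * ng ^ 2 = (na ^ 2 + (η * T * ng) ^ 2 ) / T := by
      field_simp
    rw [e, le_div_iff₀ hT]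
    nlinarith [(abs_le.mp hcs).1, mul_nonneg hη hT.le, sq_nonneg (na - T * η * ng)]
  have hvsq : η ^ 2 * nv ^ 2 ≤ 4 * η ^ 2 * L ^ 2 := by
    have h3 : nv ^ 2 ≤ 4 * L ^ 2 := by nlinarith
    calc η ^ 2 * nv ^ 2 ≤ η ^ 2 * (4 * L ^ 2) :=
          mul_le_mul_of_nonneg_left h3 (sq_nonneg η)
      _ = 4 * η ^ 2 * L ^ 2 := by ring
  nlinarith [mul_nonneg hη hmono]

theorem stmt_8 (d : ℕ) (FS FD : EuclideanSpace ℝ (Fin d) → ℝ) (η L : ℝ) (t : ℕ)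
    (hη : 0 ≤ η) (hL : 0 ≤ L)
    (hconvS : ConvexOn ℝ Set.univ FS) (hconvD : ConvexOn ℝ Set.univ FD)
    (hdiffS : Differentiable ℝ FS) (hdiffD : Differentiable ℝ FD)
    (hlipS : LipschitzWith L.toNNReal FS) (hlipD : LipschitzWith L.toNNReal FD)
    (wS wD : EuclideanSpace ℝ (Fin d)) :
    ‖(wS - η • gradient FS wS) - (wD - η • gradient FD wD)‖ ^ 2
      ≤ (1 + 1 / ((t : ℝ) + 1)) * ‖wS - wD‖ ^ 2
        + η ^ 2 * ((t : ℝ) + 1) * ‖gradient FS wD - gradient FD wD‖ ^ 2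
        + 4 * η ^ 2 * L ^ 2 := by
  set a := wS - wD with ha
  set v := gradient FS wS - gradient FD wD with hv
  set Δ := gradient FS wS - gradient FS wD with hΔ
  set g := gradient FS wD - gradient FD wD with hg
  have hrw : (wS - η • gradient FS wS) - (wD - η • gradient FD wD) = a - η • v := by
    rw [ha, hv, smul_sub]; abel
  have hvd : v = Δ + g := by rw [hv, hΔ, hg]; abel
  have hexp : ‖a - η • v‖ ^ 2 = ‖a‖ ^ 2 - 2 * (η * inner ℝ a v) + η ^ 2 * ‖v‖ ^ 2 := by
    rw [norm_sub_sq_real, real_inner_smul_right, norm_smul, Real.norm_eq_abs, mul_pow, sq_abs]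
  have hinner : (inner ℝ a v : ℝ) = inner ℝ a Δ + inner ℝ a g := by rw [hvd, inner_add_right]
  have hmono : (0 : ℝ) ≤ inner ℝ a Δ := by
    have := grad_mono FS hconvS hdiffS wS wD
    rw [real_inner_comm]
    exact this
  have hcs : |(inner ℝ a g : ℝ)| ≤ ‖a‖ * ‖g‖ := abs_real_inner_le_norm a g
  have hvle : ‖v‖ ≤ 2 * L := by
    calc ‖v‖ ≤ ‖gradient FS wS‖ + ‖gradient FD wD‖ := norm_sub_le _ _
    _ ≤ L + L := add_le_add (grad_norm_le FS hL hlipS wS) (grad_norm_le FD hL hlipD wD)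
    _ = 2 * L := by ring
  have ht : (0 : ℝ) < (t : ℝ) + 1 := by positivity
  rw [hrw, hexp, hinner]
  exact real_arith ‖a‖ ‖g‖ ‖v‖ _ _ η L _ hη hL ht hmono hcs hvle
    (norm_nonneg _) (norm_nonneg _) (norm_nonneg _)
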